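/- Let f be submodular with f(∅)=0 and x, y ∈ B(f) with x ≠ y. Then there exist i, j ∈ V with x_i > y_i and x_j < y_j, and an ε > 0, such that x + ε(χ_j − χ_i) ∈ B(f). (One can always make an elementary exchange from x strictly toward y within the base polyhedron.) -/
import Mathlib


/-- Exchange property of base polyhedra: given two distinct points `x, y` of
the base polyhedron `B(f)` of a submodular `f` with `f ∅ = 0`, there are
coordinates `i` with `x i > y i` and `j` with `x j < y j` and a step `ε > 0`
such that `x + ε (χ_j - χ_i) ∈ B(f)`. -/
theorem exchange_towards {V : Type*} [Fintype V] [DecidableEq V]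
    (f : Finset V → ℝ) (h0 : f ∅ = 0)
    (hsub : ∀ X Y : Finset V, f (X ∪ Y) + f (X ∩ Y) ≤ f X + f Y)
    (x y : V → ℝ)
    (hx : (∀ X : Finset V, ∑ k ∈ X, x k ≤ f X) ∧ ∑ k, x k = f Finset.univ)
    (hy : (∀ X : Finset V, ∑ k ∈ X, y k ≤ f X) ∧ ∑ k, y k = f Finset.univ)
    (hxy : x ≠ y) :
    ∃ i j : V, y i < x i ∧ x j < y j ∧
      ∃ ε : ℝ, 0 < ε ∧
        (∀ X : Finset V,
          ∑ k ∈ X, (x k + ε * ((if k = j then 1 else 0) - (if k = i then 1 else 0))) ≤ f X) ∧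
        ∑ k, (x k + ε * ((if k = j then 1 else 0) - (if k = i then 1 else 0))) =
          f Finset.univ := by
  obtain ⟨hx1, hx2⟩ := hx
  obtain ⟨hy1, hy2⟩ := hy
  -- tight sets
  have hTinter : ∀ X Y : Finset V, (∑ k ∈ X, x k = f X) → (∑ k ∈ Y, x k = f Y) →
      ∑ k ∈ X ∩ Y, x k = f (X ∩ Y) := by
    intro X Y hX hY
    have h1 := hx1 (X ∪ Y)
    have h2 := hx1 (X ∩ Y)
    have hsum : ∑ k ∈ X ∪ Y, x k + ∑ k ∈ X ∩ Y, x k = ∑ k ∈ X, x k + ∑ k ∈ Y, x k :=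
      Finset.sum_union_inter
    have := hsub X Y
    linarith
  -- find j with x j < y j
  obtain ⟨j, hjlt⟩ : ∃ j, x j < y j := by
    by_contra h
    push_neg at h
    obtain ⟨k, hk⟩ := Function.ne_iff.mp hxy
    have hk' : y k < x k := lt_of_le_of_ne (h k) fun e => hk e.symm
    have : ∑ k, y k < ∑ k, x k :=
      Finset.sum_lt_sum (fun i _ => h i) ⟨k, Finset.mem_univ k, hk'⟩
    linarith
  -- family of tight sets containing j
  set F : Finset (Finset V) :=
    Finset.univ.powerset.filter (fun X => j ∈ X ∧ ∑ k ∈ X, x k = f X) with hF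
  have hFmem : ∀ X ∈ F, j ∈ X ∧ ∑ k ∈ X, x k = f X := by
    intro X hX
    simpa [hF] using (Finset.mem_filter.mp hX).2
  have hFuniv : Finset.univ ∈ F := by
    simp [hF, hx2]
  set D : Finset V := F.inf id with hD
  have hjD : j ∈ D := by
    have : ({j} : Finset V) ≤ D := by
      apply Finset.le_inf
      intro X hX
      simpa using (hFmem X hX).1
    simpa using this (Finset.mem_singleton_self j)
  have hTinf : ∀ S : Finset (Finset V), (hS : S.Nonempty) → (∀ X ∈ S, ∑ k ∈ X, x k = f X) →
      ∑ k ∈ S.inf id, x k = f (S.inf id) := by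
    intro S hS
    induction hS using Finset.Nonempty.cons_induction with
    | singleton a => intro h; simpa using h a (by simp)
    | cons a s ha hs ih =>
        intro h
        rw [Finset.inf_cons]
        exact hTinter a (s.inf id) (h a (by simp))
          (ih (fun X hX => h X (Finset.mem_cons_of_mem hX)))
  have hDtight : ∑ k ∈ D, x k = f D :=
    hTinf F ⟨_, hFuniv⟩ (fun X hX => (hFmem X hX).2)
  -- find i ∈ D with y i < x i
  obtain ⟨i, hiD, hilt⟩ : ∃ i ∈ D, y i < x i := by
    by_contra h
    push_neg at h
    have hlt : ∑ k ∈ D, x k < ∑ k ∈ D, y k :=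
      Finset.sum_lt_sum (fun k hk => h k hk) ⟨j, hjD, hjlt⟩
    have := hy1 D
    linarith
  have hij : i ≠ j := by
    intro e; rw [e] at hilt; linarith
  refine ⟨i, j, hilt, hjlt, ?_⟩
  -- sets containing j but not i
  set S : Finset (Finset V) :=
    Finset.univ.powerset.filter (fun X => j ∈ X ∧ i ∉ X) with hS
  have hSne : S.Nonempty := by
    refine ⟨{j}, ?_⟩
    simp [hS, hij]
  have hSpos : ∀ X ∈ S, 0 < f X - ∑ k ∈ X, x k := by
    intro X hX
    obtain ⟨hjX, hiX⟩ : j ∈ X ∧ i ∉ X := by simpa [hS] using (Finset.mem_filter.mp hX).2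
    have hle := hx1 X
    rcases lt_or_eq_of_le hle with hlt | heq
    · linarith
    · exfalso
      apply hiX
      have hXF : X ∈ F := by
        simp [hF, hjX, heq]
      exact (Finset.inf_le hXF : D ≤ X) hiD
  set ε : ℝ := S.inf' hSne (fun X => f X - ∑ k ∈ X, x k) with hε
  have hεpos : 0 < ε := by
    rw [hε, Finset.lt_inf'_iff]
    exact hSpos
  have key : ∀ X : Finset V,
      ∑ k ∈ X, (x k + ε * ((if k = j then 1 else 0) - (if k = i then 1 else 0))) =
      ∑ k ∈ X, x k + ε * ((if j ∈ X then (1:ℝ) else 0) - (if i ∈ X then 1 else 0)) := by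
    intro X
    rw [Finset.sum_add_distrib, ← Finset.mul_sum, Finset.sum_sub_distrib]
    simp [Finset.sum_ite_eq']
  refine ⟨ε, hεpos, ?_, ?_⟩
  · intro X
    rw [key X]
    by_cases hjX : j ∈ X
    · by_cases hiX : i ∈ X
      · simpa [hjX, hiX] using hx1 X
      · have hXS : X ∈ S := by simp [hS, hjX, hiX]
        have : ε ≤ f X - ∑ k ∈ X, x k := Finset.inf'_le _ hXS
        simp only [hjX, hiX, if_true, if_false]
        linarith
    · by_cases hiX : i ∈ X
      · have := hx1 X
        simp only [hjX, hiX, if_true, if_false]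
        linarith
      · simpa [hjX, hiX] using hx1 X
  · rw [key Finset.univ]
    simp [hx2]
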